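/- If μ ≥ 2, then g is chaotic in the sense of Li and Yorke: there exists an uncountable set S ⊆ [ν − 1, ν] containing no periodic points of g such that for all p, q ∈ S with p ≠ q, limsup_{n→∞} |gⁿ(p) − gⁿ(q)| > 0 and liminf_{n→∞} |gⁿ(p) − gⁿ(q)| = 0. -/

import Mathlib

open Set Filter
open Topology

/-- The piecewise-linear threshold map `g(1,1,·)` of the chaotic NOR gate,
with `ν = 1/(1+μ)`. -/
noncomputable def gmap (μ : ℝ) : ℝ → ℝ := fun x =>
  let ν : ℝ := 1 / (1 + μ)
  if x ≤ ν - 1 / 2 then ν - 1 + μ * (1 + x - ν) else ν - 1 + μ * (ν - x)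

namespace LiYorkeAux

/-- tent map with slope μ -/
noncomputable def Tm (μ : ℝ) (y : ℝ) : ℝ := if y ≤ 1/2 then μ * y else μ * (1 - y)

/-- inverse branches -/
noncomputable def Bm (μ : ℝ) (b : Bool) (y : ℝ) : ℝ := if b then 1 - y/μ else y/μ

lemma conj {μ : ℝ} (y : ℝ) :
    gmap μ (y + (1/(1+μ) - 1)) = Tm μ y + (1/(1+μ) - 1) := by
  simp only [gmap, Tm]
  have h : y + (1/(1+μ) - 1) ≤ 1/(1+μ) - 1/2 ↔ y ≤ 1/2 := by constructor <;> intro h <;> linarith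
  by_cases hy : y ≤ 1/2
  · rw [if_pos (h.mpr hy), if_pos hy]; ring
  · rw [if_neg (fun hc => hy (h.mp hc)), if_neg hy]; ring

lemma conj_iter {μ : ℝ} (y : ℝ) (n : ℕ) :
    (gmap μ)^[n] (y + (1/(1+μ) - 1)) = (Tm μ)^[n] y + (1/(1+μ) - 1) := by
  induction n generalizing y with
  | zero => simp
  | succ n ih =>
    rw [Function.iterate_succ_apply, Function.iterate_succ_apply, conj, ih]

variable {μ : ℝ}

lemma div_mem (hμ : 2 ≤ μ) {y : ℝ} (hy : y ∈ Icc (0:ℝ) 1) : y/μ ∈ Icc (0:ℝ) (1/2) := by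
  obtain ⟨h0, h1⟩ := hy
  have hμ0 : (0:ℝ) < μ := by linarith
  constructor
  · positivity
  · rw [div_le_iff₀ hμ0]; nlinarith

lemma Bm_mem (hμ : 2 ≤ μ) {y : ℝ} (hy : y ∈ Icc (0:ℝ) 1) (b : Bool) :
    Bm μ b y ∈ Icc (0:ℝ) 1 := by
  obtain ⟨h0, h1⟩ := div_mem hμ hy
  cases b <;> simp [Bm] <;> constructor <;> linarith

lemma Bm_false (y : ℝ) : Bm μ false y = y/μ := by simp [Bm]
lemma Bm_true (y : ℝ) : Bm μ true y = 1 - y/μ := by simp [Bm]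

lemma Tm_Bm (hμ : 2 ≤ μ) {y : ℝ} (hy : y ∈ Icc (0:ℝ) 1) (b : Bool) :
    Tm μ (Bm μ b y) = y := by
  have hμ0 : (0:ℝ) < μ := by linarith
  obtain ⟨h0, h1⟩ := div_mem hμ hy
  cases b
  · rw [Bm_false, Tm, if_pos h1, mul_div_cancel₀ _ (ne_of_gt hμ0)]
  · rw [Bm_true, Tm]
    by_cases hc : 1 - y/μ ≤ 1/2
    · have he : y/μ = 1/2 := by linarith
      rw [if_pos hc, mul_sub, mul_one, mul_div_cancel₀ _ (ne_of_gt hμ0)]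
      have hy2 : y = μ/2 := by field_simp at he; linarith
      linarith
    · rw [if_neg hc]
      have h2 : μ * (1 - (1 - y/μ)) = μ * (y/μ) := by ring_nf
      rw [h2, mul_div_cancel₀ _ (ne_of_gt hμ0)]

lemma Bm_dist (hμ : 2 ≤ μ) (b : Bool) (y z : ℝ) :
    |Bm μ b y - Bm μ b z| ≤ |y - z|/2 := by
  have hμ0 : (0:ℝ) < μ := by linarith
  have key : ∀ u v : ℝ, |u/μ - v/μ| ≤ |u - v|/2 := by
    intro u v
    have h : u/μ - v/μ = (u-v)/μ := by ring
    rw [h, abs_div, abs_of_pos hμ0]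
    gcongr
  cases b
  · rw [Bm_false, Bm_false]; exact key y z
  · rw [Bm_true, Bm_true]
    have h : 1 - y/μ - (1 - z/μ) = z/μ - y/μ := by ring
    rw [h]
    calc |z/μ - y/μ| ≤ |z - y|/2 := key z y
      _ = |y - z|/2 := by rw [abs_sub_comm]
noncomputable def Qm (μ : ℝ) : (ℕ → Bool) → ℕ → ℝ → ℝ
  | _, 0, y => y
  | s, n+1, y => Bm μ (s 0) (Qm μ (fun k => s (k+1)) n y)

lemma Qm_mem (hμ : 2 ≤ μ) : ∀ (n : ℕ) (s : ℕ → Bool) {y : ℝ}, y ∈ Icc (0:ℝ) 1 →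
    Qm μ s n y ∈ Icc (0:ℝ) 1 := by
  intro n
  induction n with
  | zero => intro s y hy; exact hy
  | succ n ih => intro s y hy; exact Bm_mem hμ (ih _ hy) _

lemma Qm_dist (hμ : 2 ≤ μ) : ∀ (n : ℕ) (s : ℕ → Bool) (y z : ℝ),
    |Qm μ s n y - Qm μ s n z| ≤ |y - z|/2^n := by
  intro n
  induction n with
  | zero => intro s y z; simp [Qm]
  | succ n ih =>
    intro s y z
    calc |Qm μ s (n+1) y - Qm μ s (n+1) z|
        ≤ |Qm μ (fun k => s (k+1)) n y - Qm μ (fun k => s (k+1)) n z| / 2 :=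
          Bm_dist hμ _ _ _
      _ ≤ (|y - z|/2^n)/2 := by gcongr; exact ih _ y z
      _ = |y - z|/2^(n+1) := by ring

lemma Qm_snoc : ∀ (n : ℕ) (s : ℕ → Bool) (y : ℝ),
    Qm μ s (n+1) y = Qm μ s n (Bm μ (s n) y) := by
  intro n
  induction n with
  | zero => intro s y; simp [Qm]
  | succ n ih =>
    intro s y
    show Bm μ (s 0) (Qm μ (fun k => s (k+1)) (n+1) y) = _
    rw [ih (fun k => s (k+1)) y]
    rfl

lemma Qm_cauchy (hμ : 2 ≤ μ) (s : ℕ → Bool) : CauchySeq (fun n => Qm μ s n 0) := by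
  apply cauchySeq_of_le_geometric (1/2) 1 (by norm_num)
  intro n
  rw [Real.dist_eq, Qm_snoc n s 0]
  have h01 : (0:ℝ) ∈ Icc (0:ℝ) 1 := by norm_num
  have hB := Bm_mem hμ h01 (s n)
  calc |Qm μ s n 0 - Qm μ s n (Bm μ (s n) 0)| ≤ |0 - Bm μ (s n) 0|/2^n := Qm_dist hμ n s _ _
    _ ≤ 1/2^n := by
        rw [zero_sub, abs_neg, abs_of_nonneg hB.1]
        gcongr
        exact hB.2
    _ = 1 * (1/2)^n := by rw [one_mul, one_div, one_div, inv_pow]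

noncomputable def xpt (μ : ℝ) (s : ℕ → Bool) : ℝ := limUnder atTop (fun n => Qm μ s n 0)

lemma xpt_tendsto (hμ : 2 ≤ μ) (s : ℕ → Bool) :
    Tendsto (fun n => Qm μ s n 0) atTop (𝓝 (xpt μ s)) :=
  (Qm_cauchy hμ s).tendsto_limUnder

lemma xpt_mem (hμ : 2 ≤ μ) (s : ℕ → Bool) : xpt μ s ∈ Icc (0:ℝ) 1 :=
  isClosed_Icc.mem_of_tendsto (xpt_tendsto hμ s)
    (Eventually.of_forall fun n => Qm_mem hμ n s (by norm_num))

lemma Bm_cont (b : Bool) : Continuous (Bm μ b) := by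
  have hf : Bm μ false = fun y : ℝ => y/μ := funext fun y => Bm_false y
  have ht : Bm μ true = fun y : ℝ => 1 - y/μ := funext fun y => Bm_true y
  cases b
  · rw [hf]; fun_prop
  · rw [ht]; fun_prop

lemma xpt_cons (hμ : 2 ≤ μ) (s : ℕ → Bool) :
    xpt μ s = Bm μ (s 0) (xpt μ (fun k => s (k+1))) := by
  have h1 : Tendsto (fun n => Qm μ s (n+1) 0) atTop (𝓝 (xpt μ s)) :=
    (xpt_tendsto hμ s).comp (tendsto_add_atTop_nat 1)
  have h2 : Tendsto (fun n => Bm μ (s 0) (Qm μ (fun k => s (k+1)) n 0)) atTop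
      (𝓝 (Bm μ (s 0) (xpt μ (fun k => s (k+1))))) :=
    ((Bm_cont (s 0)).tendsto _).comp (xpt_tendsto hμ _)
  have he : (fun n => Qm μ s (n+1) 0) = fun n => Bm μ (s 0) (Qm μ (fun k => s (k+1)) n 0) := rfl
  rw [he] at h1
  exact tendsto_nhds_unique h1 h2

lemma Tm_xpt (hμ : 2 ≤ μ) (s : ℕ → Bool) :
    Tm μ (xpt μ s) = xpt μ (fun k => s (k+1)) := by
  rw [xpt_cons hμ s]
  exact Tm_Bm hμ (xpt_mem hμ _) _

lemma Tm_iter_xpt (hμ : 2 ≤ μ) : ∀ (n : ℕ) (s : ℕ → Bool),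
    (Tm μ)^[n] (xpt μ s) = xpt μ (fun k => s (k + n)) := by
  intro n
  induction n with
  | zero => intro s; simp
  | succ n ih =>
    intro s
    rw [Function.iterate_succ_apply, Tm_xpt hμ s, ih]
    simp only [add_assoc, Nat.add_comm 1 n]

lemma xpt_close (hμ : 2 ≤ μ) : ∀ (m : ℕ) (s t : ℕ → Bool), (∀ k < m, s k = t k) →
    |xpt μ s - xpt μ t| ≤ (1/2)^m := by
  intro m
  induction m with
  | zero =>
    intro s t _
    have hs := xpt_mem hμ s; have ht := xpt_mem hμ t
    rw [pow_zero, abs_le]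
    constructor <;> [linarith [hs.1, ht.2]; linarith [hs.2, ht.1]]
  | succ m ih =>
    intro s t h
    rw [xpt_cons hμ s, xpt_cons hμ t, h 0 (Nat.succ_pos m)]
    calc |Bm μ (t 0) (xpt μ fun k => s (k+1)) - Bm μ (t 0) (xpt μ fun k => t (k+1))|
        ≤ |xpt μ (fun k => s (k+1)) - xpt μ (fun k => t (k+1))|/2 := Bm_dist hμ _ _ _
      _ ≤ (1/2)^m/2 := by gcongr; exact ih _ _ fun k hk => h (k+1) (by omega)
      _ = (1/2)^(m+1) := by ring

lemma xpt_ge_half (hμ : 2 ≤ μ) {s : ℕ → Bool} (hs : s 0 = true) : 1/2 ≤ xpt μ s := by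
  rw [xpt_cons hμ s, hs, Bm_true]
  have := div_mem hμ (xpt_mem hμ (fun k => s (k+1)))
  linarith [this.2]

lemma xpt_le_quarter (hμ : 2 ≤ μ) {s : ℕ → Bool} (h0 : s 0 = false) (h1 : s 1 = false) :
    xpt μ s ≤ 1/4 := by
  have hμ0 : (0:ℝ) < μ := by linarith
  rw [xpt_cons hμ s, h0, Bm_false, xpt_cons hμ (fun k => s (k+1))]
  show Bm μ (s 1) _ / μ ≤ 1/4
  rw [h1, Bm_false]
  set w := xpt μ (fun k => (fun k' => s (k'+1)) (k+1)) with hw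
  have hmem := xpt_mem hμ (fun k => (fun k' => s (k'+1)) (k+1))
  rw [div_div, div_le_iff₀ (by positivity)]
  nlinarith [hmem.1, hmem.2]

lemma xpt_sep (hμ : 2 ≤ μ) {s t : ℕ → Bool} (h0 : s 0 = false) (h1 : s 1 = false)
    (h0' : t 0 = true) : 1/4 ≤ |xpt μ s - xpt μ t| := by
  have ha := xpt_le_quarter hμ h0 h1
  have hb := xpt_ge_half hμ h0'
  rw [abs_sub_comm]
  calc (1:ℝ)/4 ≤ xpt μ t - xpt μ s := by linarith
    _ ≤ |xpt μ t - xpt μ s| := le_abs_self _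
/-- The symbolic sequence attached to `α`. -/
def seqOf (α : ℕ → Bool) (n : ℕ) : Bool :=
  if n = 0 then false
  else
    let m := Nat.log 2 n
    let r := n - 2^m
    if r = 0 then true else if r ≤ m then false else α ((r - m - 1)/2)

lemma seqOf_decode (α : ℕ → Bool) (m r : ℕ) (hr : r < 2^m) :
    seqOf α (2^m + r) =
      if r = 0 then true else if r ≤ m then false else α ((r - m - 1)/2) := by
  have h1 : (1:ℕ) ≤ 2^m := Nat.one_le_two_pow
  have hn0 : 2^m + r ≠ 0 := by omega
  have hlt : 2^m + r < 2^(m+1) := by rw [pow_succ]; omega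
  have hlog : Nat.log 2 (2^m + r) = m :=
    Nat.log_eq_of_pow_le_of_lt_pow (Nat.le_add_right _ _) hlt
  simp only [seqOf, if_neg hn0, hlog, Nat.add_sub_cancel_left]

lemma two_mul_lt_pow : ∀ m : ℕ, 3 ≤ m → 2*m < 2^m := by
  intro m
  induction m with
  | zero => omega
  | succ m ih =>
    intro h
    rcases Nat.lt_or_ge m 3 with hm | hm
    · interval_cases m <;> omega
    · have := ih hm
      have h2 : 2 ≤ 2^m := Nat.one_lt_two_pow (by omega)
      rw [pow_succ]; omega

lemma seq_start (α : ℕ → Bool) (m : ℕ) : seqOf α (2^m) = true := by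
  have := seqOf_decode α m 0 (Nat.two_pow_pos m)
  simpa using this

lemma seq_zero (α : ℕ → Bool) (m i : ℕ) (h1 : 1 ≤ i) (h2 : i ≤ m) :
    seqOf α (2^m + i) = false := by
  have hlt : i < 2^m := lt_of_le_of_lt h2 (Nat.lt_two_pow_self (n := m))
  rw [seqOf_decode α m i hlt, if_neg (by omega), if_pos h2]

lemma seq_pair (α : ℕ → Bool) (i m : ℕ) (hm : 2*i + 3 ≤ m) :
    seqOf α (2^m + (m + 2*i + 1)) = α i ∧ seqOf α (2^m + (m + 2*i + 2)) = α i := by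
  have hp := two_mul_lt_pow m (by omega)
  have hr1 : m + 2*i + 1 < 2^m := by omega
  have hr2 : m + 2*i + 2 < 2^m := by omega
  constructor
  · rw [seqOf_decode α m _ hr1, if_neg (by omega), if_neg (by omega)]
    congr 1
    omega
  · rw [seqOf_decode α m _ hr2, if_neg (by omega), if_neg (by omega)]
    congr 1
    omega
noncomputable def fpt (μ ν : ℝ) (α : ℕ → Bool) : ℝ := xpt μ (seqOf α) + (ν - 1)

lemma key (hμ : 2 ≤ μ) {ν : ℝ} (hν : ν = 1 / (1 + μ)) (α : ℕ → Bool) (n : ℕ) :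
    (gmap μ)^[n] (fpt μ ν α) = xpt μ (fun k => seqOf α (k + n)) + (ν - 1) := by
  rw [fpt, hν, conj_iter, Tm_iter_xpt hμ]

lemma dist_eq (hμ : 2 ≤ μ) {ν : ℝ} (hν : ν = 1 / (1 + μ)) (α β : ℕ → Bool) (n : ℕ) :
    |(gmap μ)^[n] (fpt μ ν α) - (gmap μ)^[n] (fpt μ ν β)| =
      |xpt μ (fun k => seqOf α (k + n)) - xpt μ (fun k => seqOf β (k + n))| := by
  rw [key hμ hν, key hμ hν]
  congr 1
  ring

lemma sep (hμ : 2 ≤ μ) (α β : ℕ → Bool) (i : ℕ) (hi : α i ≠ β i) (N : ℕ) :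
    ∃ n ≥ N, 1/4 ≤ |xpt μ (fun k => seqOf α (k + n)) - xpt μ (fun k => seqOf β (k + n))| := by
  set m := N + 2*i + 3 with hm
  set n := 2^m + (m + 2*i + 1) with hn
  have hmlt : m < 2^m := Nat.lt_two_pow_self (n := m)
  refine ⟨n, by omega, ?_⟩
  have hpa := seq_pair α i m (by omega)
  have hpb := seq_pair β i m (by omega)
  have e0 : ∀ γ : ℕ → Bool, seqOf γ (0 + n) = seqOf γ (2^m + (m + 2*i + 1)) := by
    intro γ; congr 1; omega
  have e1 : ∀ γ : ℕ → Bool, seqOf γ (1 + n) = seqOf γ (2^m + (m + 2*i + 2)) := by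
    intro γ; congr 1; omega
  cases hai : α i
  · have hbi : β i = true := by
      cases hbb : β i
      · exact absurd (hai.trans hbb.symm) hi
      · rfl
    apply xpt_sep hμ (s := fun k => seqOf α (k + n)) (t := fun k => seqOf β (k + n))
    · show seqOf α (0 + n) = false; rw [e0 α, hpa.1, hai]
    · show seqOf α (1 + n) = false; rw [e1 α, hpa.2, hai]
    · show seqOf β (0 + n) = true; rw [e0 β, hpb.1, hbi]
  · have hbi : β i = false := by
      cases hbb : β i
      · rfl
      · exact absurd (hai.trans hbb.symm) hi
    rw [abs_sub_comm]
    apply xpt_sep hμ (s := fun k => seqOf β (k + n)) (t := fun k => seqOf α (k + n))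
    · show seqOf β (0 + n) = false; rw [e0 β, hpb.1, hbi]
    · show seqOf β (1 + n) = false; rw [e1 β, hpb.2, hbi]
    · show seqOf α (0 + n) = true; rw [e0 α, hpa.1, hai]

lemma agree (hμ : 2 ≤ μ) (α β : ℕ → Bool) (m₀ N : ℕ) :
    ∃ n ≥ N, |xpt μ (fun k => seqOf α (k + n)) - xpt μ (fun k => seqOf β (k + n))| ≤ (1/2)^m₀ := by
  set m := N + m₀ with hm
  have hmlt : m < 2^m := Nat.lt_two_pow_self (n := m)
  refine ⟨2^m, by omega, ?_⟩
  apply xpt_close hμ m₀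
  intro k hk
  have hv : ∀ γ : ℕ → Bool, seqOf γ (k + 2^m) = seqOf γ (2^m + k) := by
    intro γ; congr 1; omega
  rcases Nat.eq_zero_or_pos k with rfl | hk1
  · rw [hv α, hv β]
    show seqOf α (2^m + 0) = seqOf β (2^m + 0)
    simp only [Nat.add_zero]
    rw [seq_start, seq_start]
  · rw [hv α, hv β, seq_zero α m k hk1 (by omega), seq_zero β m k hk1 (by omega)]
lemma fpt_injective (hμ : 2 ≤ μ) {ν : ℝ} (hν : ν = 1 / (1 + μ)) :
    Function.Injective (fpt μ ν) := by
  intro α β hfe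
  by_contra hne
  have hexi : ∃ i, α i ≠ β i := by
    by_contra h
    push_neg at h
    exact hne (funext h)
  obtain ⟨i, hi⟩ := hexi
  obtain ⟨n, -, hsep⟩ := sep hμ α β i hi 0
  have h0 : |(gmap μ)^[n] (fpt μ ν α) - (gmap μ)^[n] (fpt μ ν β)| = 0 := by
    rw [hfe]; simp
  rw [dist_eq hμ hν] at h0
  linarith

lemma not_countable_funs : ¬ Countable (ℕ → Bool) := by
  classical
  intro hc
  obtain ⟨e, he⟩ := (@exists_injective_nat (ℕ → Bool) hc)
  have hj : Function.Injective (fun (s : Set ℕ) (n : ℕ) => decide (n ∈ s)) := by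
    intro s t h
    ext n
    have := congrFun h n
    simpa [decide_eq_decide] using this
  exact Function.cantor_injective (e ∘ (fun (s : Set ℕ) (n : ℕ) => decide (n ∈ s))) (he.comp hj)

lemma not_periodic (hμ : 2 ≤ μ) {ν : ℝ} (hν : ν = 1 / (1 + μ)) (α : ℕ → Bool) :
    ¬ ∃ n : ℕ, 0 < n ∧ (gmap μ)^[n] (fpt μ ν α) = fpt μ ν α := by
  rintro ⟨k, hk, hper⟩
  set m := k + 1 with hm
  set n := 2^m with hn
  have hiter : (gmap μ)^[n + k] (fpt μ ν α) = (gmap μ)^[n] (fpt μ ν α) := by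
    rw [Function.iterate_add_apply, hper]
  rw [key hμ hν, key hμ hν] at hiter
  have h1 : 1/2 ≤ xpt μ (fun j => seqOf α (j + n)) := by
    apply xpt_ge_half hμ
    show seqOf α (0 + n) = true
    rw [Nat.zero_add, hn, seq_start]
  have h2 : xpt μ (fun j => seqOf α (j + (n + k))) ≤ 1/4 := by
    apply xpt_le_quarter hμ
    · show seqOf α (0 + (n + k)) = false
      have e : 0 + (n + k) = 2^m + k := by omega
      rw [e, seq_zero α m k hk (by omega)]
    · show seqOf α (1 + (n + k)) = false
      have e : 1 + (n + k) = 2^m + (k+1) := by omega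
      rw [e, seq_zero α m (k+1) (by omega) (by omega)]
  linarith

end LiYorkeAux

open LiYorkeAux in
/-- For `μ ≥ 2`, `g` is chaotic in the sense of Li and Yorke: there is an uncountable
scrambled set `S ⊆ [ν − 1, ν]` containing no periodic points. -/
theorem gmap_liYorke_chaos (μ : ℝ) (hμ : 2 ≤ μ) (ν : ℝ) (hν : ν = 1 / (1 + μ)) :
    ∃ S : Set ℝ, S ⊆ Icc (ν - 1) ν ∧ ¬ S.Countable ∧
      (∀ p ∈ S, ¬ ∃ n : ℕ, 0 < n ∧ (gmap μ)^[n] p = p) ∧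
      ∀ p ∈ S, ∀ q ∈ S, p ≠ q →
        0 < limsup (fun n : ℕ => |(gmap μ)^[n] p - (gmap μ)^[n] q|) atTop ∧
        liminf (fun n : ℕ => |(gmap μ)^[n] p - (gmap μ)^[n] q|) atTop = 0 := by
  refine ⟨Set.range (fpt μ ν), ?_, ?_, ?_, ?_⟩
  · rintro p ⟨α, rfl⟩
    have h := xpt_mem hμ (seqOf α)
    exact ⟨by simp only [fpt]; linarith [h.1], by simp only [fpt]; linarith [h.2]⟩
  · intro hc
    have hcc := hc.preimage (fpt_injective hμ hν)
    rw [Set.preimage_range] at hcc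
    exact not_countable_funs (Set.countable_univ_iff.mp hcc)
  · rintro p ⟨α, rfl⟩
    exact not_periodic hμ hν α
  · rintro p ⟨α, rfl⟩ q ⟨β, rfl⟩ hpq
    have hexi : ∃ i, α i ≠ β i := by
      by_contra h
      push_neg at h
      exact hpq (congrArg (fpt μ ν) (funext h))
    obtain ⟨i, hi⟩ := hexi
    set d : ℕ → ℝ := fun n => |(gmap μ)^[n] (fpt μ ν α) - (gmap μ)^[n] (fpt μ ν β)| with hd
    have hb1 : ∀ n, d n ≤ 1 := by
      intro n
      rw [hd]
      simp only []
      rw [dist_eq hμ hν]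
      have ha := xpt_mem hμ (fun k => seqOf α (k + n))
      have hbb := xpt_mem hμ (fun k => seqOf β (k + n))
      rw [abs_le]
      constructor <;> [linarith [ha.1, hbb.2]; linarith [ha.2, hbb.1]]
    have hb0 : ∀ n, 0 ≤ d n := fun n => abs_nonneg _
    have hbdd : IsBoundedUnder (· ≤ ·) atTop d := isBoundedUnder_of ⟨1, hb1⟩
    have hbdd_ge : IsBoundedUnder (· ≥ ·) atTop d := isBoundedUnder_of ⟨0, hb0⟩
    constructor
    · have hfreq : ∃ᶠ n in atTop, 1/4 ≤ d n := by
        rw [frequently_atTop]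
        intro N
        obtain ⟨n, hn, hle⟩ := sep hμ α β i hi N
        exact ⟨n, hn, by rw [hd]; simp only []; rw [dist_eq hμ hν]; exact hle⟩
      have hls := le_limsup_of_frequently_le hfreq hbdd
      calc (0:ℝ) < 1/4 := by norm_num
        _ ≤ _ := hls
    · apply le_antisymm
      · by_contra h
        push_neg at h
        obtain ⟨mm, hmm⟩ := exists_pow_lt_of_lt_one h (by norm_num : (1:ℝ)/2 < 1)
        have hfq : ∃ᶠ n in atTop, d n ≤ (1/2)^mm := by
          rw [frequently_atTop]
          intro N
          obtain ⟨n, hn, hle⟩ := agree hμ α β mm N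
          exact ⟨n, hn, by rw [hd]; simp only []; rw [dist_eq hμ hν]; exact hle⟩
        have := liminf_le_of_frequently_le hfq hbdd_ge
        linarith
      · exact le_liminf_of_le hbdd.isCoboundedUnder_ge (Eventually.of_forall hb0)
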